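/- arXiv:2307.02314 — 2 statements merged into one kernel-verified Lean document; each statement's English description precedes it below -/
import Mathlib

section
/- Let G be a graph, S ⊆ V(G), v ∈ V(G), q ≥ 2, and S' = (S \ {v}) ∪ N(v). Then χ'_q(G,S) ≥ χ'_q(G−v, S') ≥ χ'_q(G,S) − q. -/
open Finset

variable {V : Type*}

/-- The set of colours appearing on edges incident to vertex `v`. -/
def vColors (G : SimpleGraph V) (f : V → V → ℕ) (v : V) : Set ℕ :=
  {c | ∃ u, G.Adj v u ∧ f v u = c}

/-- The set of colours used on edges of `G`. -/
def colorsOf (G : SimpleGraph V) (f : V → V → ℕ) : Set ℕ :=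
  {c | ∃ u v, G.Adj u v ∧ f u v = c}

/-- An edge `q`-colouring: a symmetric assignment of colours to edges such that
every vertex is incident with at most `q` distinct colours. -/
def IsEdgeQColoring (G : SimpleGraph V) (q : ℕ) (f : V → V → ℕ) : Prop :=
  (∀ u v, f u v = f v u) ∧ ∀ v, (vColors G f v).ncard ≤ q

/-- `S`-composability: every vertex of `S` sees at most `q - 1` non-zero colours. -/
def IsComposable (G : SimpleGraph V) (q : ℕ) (S : Set V) (f : V → V → ℕ) : Prop :=
  ∀ v ∈ S, ((vColors G f v) \ {0}).ncard ≤ q - 1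

/-- `χ'_q(G, S)`: maximum number of non-zero colours of an `S`-composable edge
`q`-colouring of `G`. -/
noncomputable def chiq (G : SimpleGraph V) (q : ℕ) (S : Set V) : ℕ :=
  sSup {k | ∃ f, IsEdgeQColoring G q f ∧ IsComposable G q S f ∧
    ((colorsOf G f) \ {0}).ncard = k}

/-- `χ'_q(G)`: maximum number of distinct colours of an edge `q`-colouring of `G`. -/
noncomputable def chimax (G : SimpleGraph V) (q : ℕ) : ℕ :=
  sSup {k | ∃ f, IsEdgeQColoring G q f ∧ (colorsOf G f).ncard = k}

/-- `M` is a matching in `G`: a set of edges, pairwise not sharing a vertex. -/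
def IsMatchingSet (G : SimpleGraph V) (M : Set (Sym2 V)) : Prop :=
  M ⊆ G.edgeSet ∧ ∀ e ∈ M, ∀ e' ∈ M, e ≠ e' → ∀ v, v ∈ e → v ∉ e'

/-- `M` is a maximal matching in `G`. -/
def IsMaximalMatchingSet (G : SimpleGraph V) (M : Set (Sym2 V)) : Prop :=
  IsMatchingSet G M ∧ ∀ e ∈ G.edgeSet, ∃ e' ∈ M, ∃ v, v ∈ e ∧ v ∈ e'

/-- `X` is a vertex cover of `G`. -/
def IsVertexCover (G : SimpleGraph V) (X : Set V) : Prop :=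
  ∀ e ∈ G.edgeSet, ∃ v ∈ X, v ∈ e

/-- A layering of `G`. -/
def IsLayering (G : SimpleGraph V) (lam : V → ℤ) : Prop :=
  ∀ u v, G.Adj u v → |lam u - lam v| ≤ 1

/-- The graph part `G_m` of the `(λ, r, m)`-stratification: delete all edges `uv`
with `λ(u) ≡ m` and `λ(v) ≡ m + 1 (mod r)`. -/
def stratGraph (G : SimpleGraph V) (lam : V → ℤ) (r m : ℤ) : SimpleGraph V where
  Adj u v := G.Adj u v ∧
    ¬ ((lam u ≡ m [ZMOD r] ∧ lam v ≡ m + 1 [ZMOD r]) ∨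
       (lam v ≡ m [ZMOD r] ∧ lam u ≡ m + 1 [ZMOD r]))
  symm := by
    constructor
    intro u v h
    exact ⟨h.1.symm, fun hc => h.2 hc.symm⟩
  loopless := ⟨fun v h => G.loopless.irrefl v h.1⟩

/-- The set `S_m` of the `(λ, r, m)`-stratification: vertices incident with deleted
edges. -/
def stratSet (G : SimpleGraph V) (lam : V → ℤ) (r m : ℤ) : Set V :=
  {v | ∃ u, G.Adj v u ∧ ¬ (stratGraph G lam r m).Adj v u}

section Aux

variable [Fintype V]

lemma vColors_finite (G : SimpleGraph V) (f : V → V → ℕ) (w : V) :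
    (vColors G f w).Finite :=
  (Set.finite_range (f w)).subset (by rintro c ⟨u, -, rfl⟩; exact ⟨u, rfl⟩)

lemma colorsOf_finite (G : SimpleGraph V) (f : V → V → ℕ) :
    (colorsOf G f).Finite :=
  (Set.finite_range (fun p : V × V => f p.1 p.2)).subset
    (by rintro c ⟨u, w, -, rfl⟩; exact ⟨(u, w), rfl⟩)

lemma chiq_set_bdd (G : SimpleGraph V) (q : ℕ) (S : Set V) :
    BddAbove {k | ∃ f, IsEdgeQColoring G q f ∧ IsComposable G q S f ∧
      ((colorsOf G f) \ {0}).ncard = k} := by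
  refine ⟨Fintype.card V * Fintype.card V, ?_⟩
  rintro k ⟨f, -, -, rfl⟩
  calc ((colorsOf G f) \ {0}).ncard
      ≤ ((fun p : V × V => f p.1 p.2) '' Set.univ).ncard := by
        apply Set.ncard_le_ncard ?_ (Set.Finite.image _ Set.finite_univ)
        rintro c ⟨⟨u, w, -, rfl⟩, -⟩
        exact ⟨(u, w), trivial, rfl⟩
    _ ≤ (Set.univ : Set (V × V)).ncard := Set.ncard_image_le Set.finite_univ
    _ = Fintype.card V * Fintype.card V := by
        simp [Set.ncard_univ, Nat.card_eq_fintype_card]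

lemma chiq_set_nonempty (G : SimpleGraph V) (q : ℕ) (S : Set V) (hq : 1 ≤ q) :
    Set.Nonempty {k | ∃ f, IsEdgeQColoring G q f ∧ IsComposable G q S f ∧
      ((colorsOf G f) \ {0}).ncard = k} := by
  refine ⟨0, fun _ _ => 0, ⟨fun _ _ => rfl, fun w => ?_⟩, fun w _ => ?_, ?_⟩
  · calc (vColors G (fun _ _ => 0) w).ncard ≤ ({0} : Set ℕ).ncard := by
          apply Set.ncard_le_ncard ?_ (Set.finite_singleton 0)
          rintro c ⟨u, -, rfl⟩; rfl
      _ ≤ q := by simpa using hq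
  · have : (vColors G (fun _ _ => 0) w) \ {0} = ∅ := by
      ext c; simp only [Set.mem_diff, Set.mem_empty_iff_false, iff_false]
      rintro ⟨⟨u, -, rfl⟩, hc⟩; exact hc rfl
    simp [this]
  · have : (colorsOf G (fun _ _ => 0)) \ {0} = ∅ := by
      ext c; simp only [Set.mem_diff, Set.mem_empty_iff_false, iff_false]
      rintro ⟨⟨u, w, -, rfl⟩, hc⟩; exact hc rfl
    simp [this]

lemma chiq_mem (G : SimpleGraph V) (q : ℕ) (S : Set V) (hq : 1 ≤ q) :
    ∃ f, IsEdgeQColoring G q f ∧ IsComposable G q S f ∧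
      ((colorsOf G f) \ {0}).ncard = chiq G q S :=
  Nat.sSup_mem (chiq_set_nonempty G q S hq) (chiq_set_bdd G q S)

lemma le_chiq (G : SimpleGraph V) (q : ℕ) (S : Set V) (f : V → V → ℕ)
    (h1 : IsEdgeQColoring G q f) (h2 : IsComposable G q S f) :
    ((colorsOf G f) \ {0}).ncard ≤ chiq G q S :=
  le_csSup (chiq_set_bdd G q S) ⟨f, h1, h2, rfl⟩

end Aux

/-- with `S' = (S \ {v}) ∪ N(v)`,
`χ'_q(G,S) ≥ χ'_q(G − v, S') ≥ χ'_q(G,S) − q`. -/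
theorem stmt5 [Fintype V] [DecidableEq V] (G : SimpleGraph V) (S : Set V) (v : V)
    (q : ℕ) (hq : 2 ≤ q) :
    chiq (G.comap (fun w : {w : V // w ≠ v} => (w : V))) q
        {w : {w : V // w ≠ v} | (w : V) ∈ (S \ {v}) ∪ G.neighborSet v} ≤ chiq G q S ∧
    chiq G q S - q ≤
      chiq (G.comap (fun w : {w : V // w ≠ v} => (w : V))) q
        {w : {w : V // w ≠ v} | (w : V) ∈ (S \ {v}) ∪ G.neighborSet v} := by
  classical
  set G' := G.comap (fun w : {w : V // w ≠ v} => (w : V)) with hG'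
  set S' := {w : {w : V // w ≠ v} | (w : V) ∈ (S \ {v}) ∪ G.neighborSet v} with hS'
  have hq1 : 1 ≤ q := le_trans (by norm_num) hq
  have hadj : ∀ (a b : {w : V // w ≠ v}), G'.Adj a b ↔ G.Adj ↑a ↑b := fun a b => Iff.rfl
  constructor
  · -- first inequality : chiq G' q S' ≤ chiq G q S
    obtain ⟨f', ⟨hsym', hcard'⟩, hcomp', hval'⟩ := chiq_mem G' q S' hq1
    set f : V → V → ℕ := fun u w =>
      if hu : u = v then 0 else if hw : w = v then 0 else f' ⟨u, hu⟩ ⟨w, hw⟩ with hf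
    have hfval : ∀ (a b : {w : V // w ≠ v}), f ↑a ↑b = f' a b := by
      intro a b
      simp [hf, a.2, b.2]
    have hfv : ∀ u w, u = v ∨ w = v → f u w = 0 := by
      intro u w h
      rcases h with h | h <;> simp [hf, h]
    have hfsym : ∀ u w, f u w = f w u := by
      intro u w
      by_cases hu : u = v
      · rw [hfv u w (Or.inl hu), hfv w u (Or.inr hu)]
      by_cases hw : w = v
      · rw [hfv u w (Or.inr hw), hfv w u (Or.inl hw)]
      · show f ↑(⟨u, hu⟩ : {w : V // w ≠ v}) ↑(⟨w, hw⟩ : {w : V // w ≠ v}) = _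
        rw [hfval ⟨u, hu⟩ ⟨w, hw⟩, hfval ⟨w, hw⟩ ⟨u, hu⟩, hsym']
    have hsubnz : ∀ (a : {w : V // w ≠ v}),
        (vColors G f ↑a) \ {0} ⊆ (vColors G' f' a) \ {0} := by
      rintro a c ⟨⟨u, hau, rfl⟩, hc0⟩
      have hu : u ≠ v := fun h =>
        hc0 (Set.mem_singleton_iff.mpr (hfv ↑a u (Or.inr h)))
      exact ⟨⟨⟨u, hu⟩, hau, (hfval a ⟨u, hu⟩).symm⟩, hc0⟩
    have hvc_v : vColors G f v ⊆ {0} := by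
      rintro c ⟨u, hvu, rfl⟩
      exact hfv v u (Or.inl rfl)
    have hQ : IsEdgeQColoring G q f := by
      refine ⟨hfsym, fun w => ?_⟩
      by_cases hw : w = v
      · subst hw
        calc (vColors G f w).ncard ≤ ({0} : Set ℕ).ncard :=
              Set.ncard_le_ncard hvc_v (Set.finite_singleton 0)
          _ ≤ q := by simpa using hq1
      set a : {w : V // w ≠ v} := ⟨w, hw⟩ with ha
      by_cases hN : G.Adj v w
      · have hsub : vColors G f w ⊆ insert 0 ((vColors G' f' a) \ {0}) := by
          rintro c ⟨u, hau, rfl⟩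
          by_cases hc0 : f w u = 0
          · rw [hc0]; exact Set.mem_insert _ _
          have hu : u ≠ v := fun h => hc0 (hfv w u (Or.inr h))
          exact Set.mem_insert_of_mem _ ⟨⟨⟨u, hu⟩, hau, (hfval a ⟨u, hu⟩).symm⟩, hc0⟩
        have haS' : a ∈ S' := Or.inr hN
        have h1 := hcomp' a haS'
        calc (vColors G f w).ncard ≤ (insert 0 ((vColors G' f' a) \ {0})).ncard :=
              Set.ncard_le_ncard hsub (((vColors_finite G' f' a).diff).insert 0)
          _ ≤ ((vColors G' f' a) \ {0}).ncard + 1 := Set.ncard_insert_le _ _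
          _ ≤ q := by omega
      · have hsub : vColors G f w ⊆ vColors G' f' a := by
          rintro c ⟨u, hau, rfl⟩
          have hu : u ≠ v := fun h => hN (h ▸ hau.symm)
          exact ⟨⟨u, hu⟩, hau, (hfval a ⟨u, hu⟩).symm⟩
        exact le_trans (Set.ncard_le_ncard hsub (vColors_finite G' f' a)) (hcard' a)
    have hC : IsComposable G q S f := by
      intro w hwS
      by_cases hw : w = v
      · subst hw
        have : (vColors G f w) \ {0} = ∅ := by
          rw [Set.diff_eq_empty]; exact hvc_v
        simp [this]
      · set a : {w : V // w ≠ v} := ⟨w, hw⟩ with ha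
        have haS' : a ∈ S' := Or.inl ⟨hwS, hw⟩
        exact le_trans (Set.ncard_le_ncard (hsubnz a)
          ((vColors_finite G' f' a).diff)) (hcomp' a haS')
    have hcols : (colorsOf G f) \ {0} = (colorsOf G' f') \ {0} := by
      ext c
      constructor
      · rintro ⟨⟨u, w, huw, rfl⟩, hc0⟩
        have hu : u ≠ v := fun h =>
          hc0 (Set.mem_singleton_iff.mpr (hfv u w (Or.inl h)))
        have hw : w ≠ v := fun h =>
          hc0 (Set.mem_singleton_iff.mpr (hfv u w (Or.inr h)))
        exact ⟨⟨⟨u, hu⟩, ⟨w, hw⟩, huw, (hfval ⟨u, hu⟩ ⟨w, hw⟩).symm⟩, hc0⟩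
      · rintro ⟨⟨a, b, hab, rfl⟩, hc0⟩
        exact ⟨⟨↑a, ↑b, hab, hfval a b⟩, hc0⟩
    calc chiq G' q S' = ((colorsOf G f) \ {0}).ncard := by rw [hcols, hval']
      _ ≤ chiq G q S := le_chiq G q S f hQ hC
  · -- second inequality : chiq G q S - q ≤ chiq G' q S'
    obtain ⟨f, ⟨hsym, hcard⟩, hcomp, hval⟩ := chiq_mem G q S hq1
    set C := vColors G f v with hCdef
    have hCfin : C.Finite := vColors_finite G f v
    have hCcard : C.ncard ≤ q := hcard v
    set g : {w : V // w ≠ v} → {w : V // w ≠ v} → ℕ := fun a b =>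
      if f ↑a ↑b ∈ C then 0 else f ↑a ↑b with hg
    have hgsym : ∀ (a b : {w : V // w ≠ v}), g a b = g b a := by
      intro a b
      simp only [hg, hsym ↑a ↑b]
    have hgval : ∀ (a b : {w : V // w ≠ v}), g a b = 0 ∨
        (g a b = f ↑a ↑b ∧ f ↑a ↑b ∉ C) := by
      intro a b
      by_cases h : f ↑a ↑b ∈ C
      · left; simp [hg, h]
      · right; exact ⟨by simp [hg, h], h⟩
    have hQ : IsEdgeQColoring G' q g := by
      refine ⟨hgsym, fun a => ?_⟩
      set A := vColors G f ↑a with hAdef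
      have hAfin : A.Finite := vColors_finite G f ↑a
      by_cases hC : ∃ u, G.Adj ↑a u ∧ f ↑a u ∈ C
      · obtain ⟨u, hau, huC⟩ := hC
        have hsub : vColors G' g a ⊆ insert 0 (A \ C) := by
          rintro c ⟨b, hb, rfl⟩
          rcases hgval a b with h | ⟨h, hnC⟩
          · rw [h]; exact Set.mem_insert _ _
          · rw [h]
            exact Set.mem_insert_of_mem _ ⟨⟨↑b, hb, rfl⟩, hnC⟩
        have h1 : (A \ C).ncard ≤ q - 1 := by
          have hss : (A \ C) ⊆ A \ {f ↑a u} := fun c hc =>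
            ⟨hc.1, fun h => hc.2 (Set.mem_singleton_iff.mp h ▸ huC)⟩
          have h2 := Set.ncard_le_ncard hss hAfin.diff
          have hmem : f ↑a u ∈ A := by rw [hAdef]; exact ⟨u, hau, rfl⟩
          rw [Set.ncard_diff_singleton_of_mem hmem] at h2
          have h3 : A.ncard ≤ q := by rw [hAdef]; exact hcard ↑a
          omega
        calc (vColors G' g a).ncard ≤ (insert 0 (A \ C)).ncard :=
              Set.ncard_le_ncard hsub (hAfin.diff.insert 0)
          _ ≤ (A \ C).ncard + 1 := Set.ncard_insert_le _ _
          _ ≤ q := by omega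
      · have hsub : vColors G' g a ⊆ A := by
          rintro c ⟨b, hb, rfl⟩
          have hnC : f ↑a ↑b ∉ C := fun h => hC ⟨↑b, hb, h⟩
          have hgb : g a b = f ↑a ↑b := by simp [hg, hnC]
          rw [hgb]; exact ⟨↑b, hb, rfl⟩
        refine le_trans (Set.ncard_le_ncard hsub hAfin) ?_
        rw [hAdef]; exact hcard ↑a
    have hCo : IsComposable G' q S' g := by
      intro a ha
      set A := vColors G f ↑a with hAdef
      have hAfin : A.Finite := vColors_finite G f ↑a
      have hsub : (vColors G' g a) \ {0} ⊆ (A \ C) \ {0} := by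
        rintro c ⟨⟨b, hb, hgc⟩, hc0⟩
        rcases hgval a b with h | ⟨h, hnC⟩
        · exact absurd (Set.mem_singleton_iff.mpr (hgc.symm.trans h)) hc0
        · rw [← hgc, h]
          refine ⟨⟨⟨↑b, hb, rfl⟩, hnC⟩, ?_⟩
          rw [← h, hgc]; exact hc0
      rcases ha with hS | hN
      · have hss : (A \ C) \ {0} ⊆ A \ {0} := fun c hc => ⟨hc.1.1, hc.2⟩
        exact le_trans (Set.ncard_le_ncard (subset_trans hsub hss)
          hAfin.diff) (hcomp ↑a hS.1)
      · have hN' : G.Adj v ↑a := hN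
        have hfC : f ↑a v ∈ C := by rw [hCdef]; exact ⟨↑a, hN', (hsym v ↑a)⟩
        have hfA : f ↑a v ∈ A := by rw [hAdef]; exact ⟨v, hN'.symm, rfl⟩
        have hss : (A \ C) \ {0} ⊆ A \ {f ↑a v} := fun c hc =>
          ⟨hc.1.1, fun h => hc.1.2 (Set.mem_singleton_iff.mp h ▸ hfC)⟩
        have h2 := Set.ncard_le_ncard (subset_trans hsub hss) hAfin.diff
        rw [Set.ncard_diff_singleton_of_mem hfA] at h2
        have h3 : A.ncard ≤ q := by rw [hAdef]; exact hcard ↑a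
        omega
    have hsubD : (colorsOf G f \ {0}) \ C ⊆ colorsOf G' g \ {0} := by
      rintro c ⟨⟨⟨u, w, huw, rfl⟩, hc0⟩, hcC⟩
      have hu : u ≠ v := fun h => hcC (show f u w ∈ C by
        rw [hCdef]; exact ⟨w, by rw [← h]; exact huw, by rw [← h]⟩)
      have hw : w ≠ v := fun h => hcC (show f u w ∈ C by
        rw [hCdef]; exact ⟨u, by rw [← h]; exact huw.symm, by rw [← h]; exact (hsym u w).symm⟩)
      refine ⟨⟨⟨u, hu⟩, ⟨w, hw⟩, huw, ?_⟩, hc0⟩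
      simp [hg, hcC]
    have h1 : (colorsOf G f \ {0}).ncard ≤ ((colorsOf G f \ {0}) \ C).ncard + C.ncard := by
      have hsplit : colorsOf G f \ {0} ⊆ ((colorsOf G f \ {0}) \ C) ∪ C := by
        intro c hc
        by_cases h : c ∈ C
        · exact Or.inr h
        · exact Or.inl ⟨hc, h⟩
      calc (colorsOf G f \ {0}).ncard
          ≤ (((colorsOf G f \ {0}) \ C) ∪ C).ncard :=
            Set.ncard_le_ncard hsplit
              ((colorsOf_finite G f).diff.diff.union hCfin)
        _ ≤ ((colorsOf G f \ {0}) \ C).ncard + C.ncard :=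
            Set.ncard_union_le _ _
    have h2 : ((colorsOf G f \ {0}) \ C).ncard ≤ (colorsOf G' g \ {0}).ncard :=
      Set.ncard_le_ncard hsubD (colorsOf_finite G' g).diff
    have h3 : (colorsOf G' g \ {0}).ncard ≤ chiq G' q S' := le_chiq G' q S' g hQ hCo
    omega
end

section
/- In the reduction graph H built from a Planar (≤3,3)-SAT formula φ with m clauses and n variables, if φ has a satisfying assignment then H has an edge g-colouring using at least m+1 distinct colours. -/
open Finset

variable {V : Type*}

/-- An edge `g`-colouring for a per-vertex bound `g`. -/
def IsEdgeGColoring (G : SimpleGraph V) (g : V → ℕ) (f : V → V → ℕ) : Prop :=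
  (∀ u v, f u v = f v u) ∧ ∀ v, (vColors G f v).ncard ≤ g v

/-- Vertices of the reduction graph `H`: clause vertices `c_i`, variable copies
`x_{j,a}`, conflict vertices `n_{j,a,b}`, and the apex vertex `u`. -/
inductive HV (n m : ℕ) where
  | clause (i : Fin m)
  | varc (j : Fin n) (a : Fin 3)
  | confl (j : Fin n) (a b : Fin 3)
  | apex
  deriving DecidableEq

/-- The reduction graph `H` built from a `(≤3,3)`-SAT formula with `m` clauses
and `n` variables, where variable `j` occurs in clause `occ j a` with sign
`sgn j a` for `a ∈ {0,1,2}`.  Variable copy `x_{j,a}` is joined to its clause;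
conflict vertex `n_{j,a,b}` (for `a < b`) is joined to `x_{j,a}` and `x_{j,b}`
iff the two occurrences have opposite signs; the apex `u` is joined to every
clause vertex and every conflict vertex. -/
def satGraph (n m : ℕ) (occ : Fin n → Fin 3 → Fin m) (sgn : Fin n → Fin 3 → Bool) :
    SimpleGraph (HV n m) :=
  SimpleGraph.fromRel (fun x y =>
    match x, y with
    | HV.clause i, HV.varc j a => occ j a = i
    | HV.varc j' a', HV.confl j a b =>
        j = j' ∧ a < b ∧ (a' = a ∨ a' = b) ∧ sgn j a ≠ sgn j b
    | HV.apex, HV.clause _ => True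
    | HV.apex, HV.confl _ a b => a < b
    | _, _ => False)

/-- The per-vertex colour bound `g` of the reduction: `g(u) = 1`, `g(c_i) = 2`,
`g(x_{j,a}) = 1`, `g(n_{j,a,b}) = 2`. -/
def satBound (n m : ℕ) : HV n m → ℕ
  | HV.clause _ => 2
  | HV.varc _ _ => 1
  | HV.confl _ _ _ => 2
  | HV.apex => 1

def cvAux {n m : ℕ} (occ : Fin n → Fin 3 → Fin m) (jw : Fin m → Fin n)
    (aw : Fin m → Fin 3) : HV n m → ℕ
  | HV.varc j a =>
      if jw (occ j a) = j ∧ aw (occ j a) = a then (occ j a).val + 1 else 0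
  | _ => 0

/-- if the formula has a satisfying assignment, then `H` has an
edge `g`-colouring using at least `m + 1` distinct colours. -/
theorem stmt16 (n m : ℕ) (hm : 1 ≤ m)
    (occ : Fin n → Fin 3 → Fin m) (sgn : Fin n → Fin 3 → Bool)
    (hocc : ∀ j, Function.Injective (occ j))
    (hsat : ∃ σ : Fin n → Bool, ∀ i : Fin m, ∃ j a, occ j a = i ∧ sgn j a = σ j) :
    ∃ f : HV n m → HV n m → ℕ,
      IsEdgeGColoring (satGraph n m occ sgn) (satBound n m) f ∧
      m + 1 ≤ (colorsOf (satGraph n m occ sgn) f).ncard := by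
  obtain ⟨σ, hσ⟩ := hsat
  choose jw aw hw1 hw2 using hσ
  classical
  refine ⟨fun x y => cvAux occ jw aw x + cvAux occ jw aw y, ⟨fun u v => Nat.add_comm _ _, ?_⟩, ?_⟩
  · -- degree-in-colours bounds
    have hcv0 : ∀ x, (∀ j a, x ≠ HV.varc j a) → cvAux occ jw aw x = 0 := by
      intro x hx
      cases x with
      | varc j a => exact absurd rfl (hx j a)
      | clause i => rfl
      | confl j a b => rfl
      | apex => rfl
    have hA : cvAux occ jw aw HV.apex = 0 := rfl
    have hC : ∀ i, cvAux occ jw aw (HV.clause i) = 0 := fun _ => rfl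
    have hN : ∀ j a b, cvAux occ jw aw (HV.confl j a b) = 0 := fun _ _ _ => rfl
    -- key: opposite signs kill one colour
    have hopp : ∀ j a b, sgn j a ≠ sgn j b →
        cvAux occ jw aw (HV.varc j a) = 0 ∨ cvAux occ jw aw (HV.varc j b) = 0 := by
      intro j a b hab
      by_contra h
      push_neg at h
      obtain ⟨h1, h2⟩ := h
      simp only [cvAux] at h1 h2
      rw [if_neg] at h1; · exact h1 rfl
      intro ⟨e1, e2⟩
      rw [if_neg] at h2; · exact h2 rfl
      intro ⟨e3, e4⟩
      have ha := hw2 (occ j a); have hb := hw2 (occ j b)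
      rw [e1, e2] at ha; rw [e3, e4] at hb
      exact hab (ha.trans hb.symm)
    intro v
    cases v with
    | apex =>
      have : vColors (satGraph n m occ sgn) (fun x y => cvAux occ jw aw x + cvAux occ jw aw y) HV.apex ⊆ {0} := by
        rintro c ⟨u, hadj, hfc⟩
        rw [satGraph, SimpleGraph.fromRel_adj] at hadj
        obtain ⟨hne, hrel⟩ := hadj
        cases u <;> simp_all [hA, hC, hN]
      calc _ ≤ ({0} : Set ℕ).ncard := Set.ncard_le_ncard this (Set.finite_singleton 0)
        _ = 1 := Set.ncard_singleton 0
    | varc j a =>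
      have : vColors (satGraph n m occ sgn) (fun x y => cvAux occ jw aw x + cvAux occ jw aw y) (HV.varc j a)
          ⊆ {cvAux occ jw aw (HV.varc j a)} := by
        rintro c ⟨u, hadj, hfc⟩
        rw [satGraph, SimpleGraph.fromRel_adj] at hadj
        obtain ⟨hne, hrel⟩ := hadj
        cases u <;> simp_all [hA, hC, hN]
      calc _ ≤ ({cvAux occ jw aw (HV.varc j a)} : Set ℕ).ncard :=
            Set.ncard_le_ncard this (Set.finite_singleton _)
        _ = 1 := Set.ncard_singleton _
    | clause i =>
      have : vColors (satGraph n m occ sgn) (fun x y => cvAux occ jw aw x + cvAux occ jw aw y) (HV.clause i)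
          ⊆ {0, (i : ℕ) + 1} := by
        rintro c ⟨u, hadj, hfc⟩
        rw [satGraph, SimpleGraph.fromRel_adj] at hadj
        obtain ⟨hne, hrel⟩ := hadj
        cases u with
        | varc j a =>
          simp only [satGraph] at hrel
          have hocc' : occ j a = i := by
            rcases hrel with h | h
            · exact h
            · exact absurd h (by simp)
          simp only [cvAux] at hfc
          subst hfc
          by_cases hw : jw (occ j a) = j ∧ aw (occ j a) = a
          · rw [if_pos hw, hocc']
            right; simp
          · rw [if_neg hw]; left; simp
        | clause i' => simp_all
        | confl j a b => simp_all
        | apex => simp_all [hA, hC, hN]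
      calc _ ≤ ({0, (i : ℕ) + 1} : Set ℕ).ncard :=
            Set.ncard_le_ncard this (Set.toFinite _)
        _ ≤ _ := by
            rw [show ({0, (i : ℕ) + 1} : Set ℕ) = insert 0 {(i : ℕ) + 1} from rfl]
            calc (insert 0 {(i : ℕ) + 1} : Set ℕ).ncard
                ≤ ({(i : ℕ) + 1} : Set ℕ).ncard + 1 :=
                  Set.ncard_insert_le _ _
              _ ≤ 2 := by rw [Set.ncard_singleton]
    | confl j a b =>
      have : vColors (satGraph n m occ sgn) (fun x y => cvAux occ jw aw x + cvAux occ jw aw y) (HV.confl j a b)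
          ⊆ {0, cvAux occ jw aw (HV.varc j a) + cvAux occ jw aw (HV.varc j b)} := by
        rintro c ⟨u, hadj, hfc⟩
        rw [satGraph, SimpleGraph.fromRel_adj] at hadj
        obtain ⟨hne, hrel⟩ := hadj
        cases u with
        | varc j' a' =>
          simp only [satGraph] at hrel
          have hr : j = j' ∧ a < b ∧ (a' = a ∨ a' = b) ∧ sgn j a ≠ sgn j b := by
            rcases hrel with h | h
            · exact absurd h (by simp)
            · exact h
          obtain ⟨hj, _, hab, hs⟩ := hr
          subst hj
          simp only [hN] at hfc
          simp only [Set.mem_insert_iff, Set.mem_singleton_iff]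
          rcases hopp j a b hs with h0 | h0
          · rcases hab with h | h <;> subst h
            · left; omega
            · right; rw [h0]; omega
          · rcases hab with h | h <;> subst h
            · right; rw [h0]; omega
            · left; omega
        | clause i' => simp_all
        | confl j' a' b' => simp_all
        | apex => simp_all [hA, hC, hN]
      calc _ ≤ ({0, cvAux occ jw aw (HV.varc j a) + cvAux occ jw aw (HV.varc j b)} : Set ℕ).ncard :=
            Set.ncard_le_ncard this (Set.toFinite _)
        _ ≤ _ := by
            calc (insert 0 {cvAux occ jw aw (HV.varc j a) + cvAux occ jw aw (HV.varc j b)} : Set ℕ).ncard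
                ≤ _ + 1 := Set.ncard_insert_le _ _
              _ ≤ 2 := by rw [Set.ncard_singleton]
  · -- at least m+1 colours
    have hcvle : ∀ x, cvAux occ jw aw x ≤ m := by
      intro x
      cases x with
      | varc j a =>
        simp only [cvAux]
        split
        · exact (occ j a).2
        · omega
      | clause i => exact Nat.zero_le m
      | confl j a b => exact Nat.zero_le m
      | apex => exact Nat.zero_le m
    have hfin : (colorsOf (satGraph n m occ sgn) (fun x y => cvAux occ jw aw x + cvAux occ jw aw y)).Finite := by
      apply Set.Finite.subset (Set.finite_Iic (2 * m))
      rintro c ⟨u, v, _, hfc⟩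
      simp only [Set.mem_Iic]
      have h1 := hcvle u; have h2 := hcvle v
      simp only at hfc
      omega
    have hsub : (↑(Finset.range (m + 1)) : Set ℕ) ⊆
        colorsOf (satGraph n m occ sgn) (fun x y => cvAux occ jw aw x + cvAux occ jw aw y) := by
      intro k hk
      simp only [Finset.coe_range, Set.mem_Iio] at hk
      rcases Nat.eq_zero_or_pos k with hk0 | hkpos
      · subst hk0
        refine ⟨HV.apex, HV.clause ⟨0, hm⟩, ?_, ?_⟩
        · rw [satGraph, SimpleGraph.fromRel_adj]
          exact ⟨by simp, Or.inl trivial⟩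
        · simp [cvAux]
      · obtain ⟨i, rfl⟩ : ∃ i, k = i + 1 := ⟨k - 1, by omega⟩
        have him : i < m := by omega
        set I : Fin m := ⟨i, him⟩
        refine ⟨HV.clause I, HV.varc (jw I) (aw I), ?_, ?_⟩
        · rw [satGraph, SimpleGraph.fromRel_adj]
          refine ⟨by simp, Or.inl ?_⟩
          exact hw1 I
        · simp only [cvAux]
          rw [hw1 I, if_pos ⟨rfl, rfl⟩]
          simp
          rfl
    calc m + 1 = (↑(Finset.range (m + 1)) : Set ℕ).ncard := by
          rw [Set.ncard_coe_finset, Finset.card_range]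
      _ ≤ _ := Set.ncard_le_ncard hsub hfin
end
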